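/- Let β < 0, ε > 0, σ ∈ ℝ, let η : (-∞,0] → ℝ be bounded and measurable, and let g₂ : ℝ³ → ℝ satisfy the joint Lipschitz condition with constant K. Then for every Y₀ ∈ ℝ there exists a constant C ≥ 0, depending only on K, σ, sup_{s≤0}|η(s)|, |g₂(0,0,0)| and β but not on U, such that for every U = (X,Y,Z) ∈ C_β^{3,-}, the function 𝔍₂(U)(t) := Y₀ + ∫_0^t g₂(X(s)+ση(s), Y(s), Z(s)) ds (t ≤ 0) belongs to C_β^- and satisfies ‖𝔍₂(U)‖_β ≤ (K/(-β))‖U‖_{C_β^{3,-}} + |Y₀| + C; the analogous statement holds for 𝔍₃(U)(t) := Z₀ + ∫_0^t g₃(X(s)+ση(s), Y(s), Z(s)) ds with g₃ in place of g₂ and Z₀ in place of Y₀. -/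

import Mathlib

open MeasureTheory
open Set

/-- The weighted sup-norm `‖Φ‖_β = sup_{t ≤ 0} e^{-βt} |Φ(t)|`. -/
noncomputable def normBeta (β : ℝ) (Φ : ℝ → ℝ) : ℝ :=
  ⨆ t : Set.Iic (0 : ℝ), Real.exp (-β * t.1) * |Φ t.1|

/-- Membership in `C_β^-`: continuous on `(-∞,0]` with finite weighted sup-norm. -/
def memCbeta (β : ℝ) (Φ : ℝ → ℝ) : Prop :=
  ContinuousOn Φ (Set.Iic 0) ∧
    BddAbove (Set.range fun t : Set.Iic (0 : ℝ) => Real.exp (-β * t.1) * |Φ t.1|)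

/-- Membership in the product space `C_β^{3,-}`. -/
def memCbeta3 (β : ℝ) (X Y Z : ℝ → ℝ) : Prop :=
  memCbeta β X ∧ memCbeta β Y ∧ memCbeta β Z

/-- Norm on `C_β^{3,-}`. -/
noncomputable def normBeta3 (β : ℝ) (X Y Z : ℝ → ℝ) : ℝ :=
  normBeta β X + normBeta β Y + normBeta β Z

/-- Joint Lipschitz condition on `g₁, g₂, g₃ : ℝ³ → ℝ` with constant `K`. -/
def JointLipschitz (K : ℝ) (g₁ g₂ g₃ : ℝ → ℝ → ℝ → ℝ) : Prop :=
  ∀ x y z x' y' z' : ℝ,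
    |g₁ x y z - g₁ x' y' z'| + |g₂ x y z - g₂ x' y' z'| + |g₃ x y z - g₃ x' y' z'| ≤
      K * (|x - x'| + |y - y'| + |z - z'|)

/-- The slow component `𝔍₂(U)(t) = Y₀ + ∫_0^t g(X(s)+ση(s), Y(s), Z(s)) ds`
of the Lyapunov–Perron operator (also `𝔍₃` with `Z₀, g₃`). -/
noncomputable def LPslow (Y₀ σ : ℝ) (η : ℝ → ℝ) (g : ℝ → ℝ → ℝ → ℝ)
    (X Y Z : ℝ → ℝ) : ℝ → ℝ :=
  fun t => Y₀ + ∫ s in (0 : ℝ)..t, g (X s + σ * η s) (Y s) (Z s)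

lemma normBeta_pt {β : ℝ} {Φ : ℝ → ℝ}
    (hb : BddAbove (Set.range fun t : Set.Iic (0 : ℝ) => Real.exp (-β * t.1) * |Φ t.1|))
    {s : ℝ} (hs : s ≤ 0) : |Φ s| ≤ Real.exp (β * s) * normBeta β Φ := by
  have h1 : Real.exp (-β * s) * |Φ s| ≤ normBeta β Φ := le_ciSup hb ⟨s, hs⟩
  have h2 : Real.exp (β * s) * Real.exp (-β * s) = 1 := by
    rw [← Real.exp_add]; ring_nf; exact Real.exp_zero
  calc |Φ s| = (Real.exp (β*s) * Real.exp (-β*s)) * |Φ s| := by rw [h2, one_mul]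
    _ = Real.exp (β*s) * (Real.exp (-β*s) * |Φ s|) := by ring
    _ ≤ Real.exp (β*s) * normBeta β Φ :=
        mul_le_mul_of_nonneg_left h1 (Real.exp_pos _).le

lemma normBeta_nonneg {β : ℝ} {Φ : ℝ → ℝ}
    (hb : BddAbove (Set.range fun t : Set.Iic (0 : ℝ) => Real.exp (-β * t.1) * |Φ t.1|)) :
    0 ≤ normBeta β Φ :=
  le_trans (by positivity) (le_ciSup hb (⟨0, Set.self_mem_Iic⟩ : Set.Iic (0:ℝ)))

set_option maxHeartbeats 1000000 in
lemma LPslow_aux (β : ℝ) (hβ : β < 0) (σ : ℝ)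
    (η : ℝ → ℝ) (hη : Measurable η) (M : ℝ) (hMb : ∀ s ≤ (0:ℝ), |η s| ≤ M)
    (K : ℝ) (hK : 0 < K) (g : ℝ → ℝ → ℝ → ℝ)
    (hg : ∀ x y z x' y' z' : ℝ, |g x y z - g x' y' z'| ≤ K * (|x-x'| + |y-y'| + |z-z'|))
    (Y₀ : ℝ) :
    ∃ C ≥ (0:ℝ), ∀ X Y Z : ℝ → ℝ, memCbeta3 β X Y Z →
      memCbeta β (LPslow Y₀ σ η g X Y Z) ∧
      normBeta β (LPslow Y₀ σ η g X Y Z) ≤ K / (-β) * normBeta3 β X Y Z + |Y₀| + C := by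
  have hM0 : 0 ≤ M := le_trans (abs_nonneg _) (hMb 0 le_rfl)
  have hβ' : (0:ℝ) < -β := by linarith
  set G : ℝ := |g 0 0 0| with hG
  have hG0 : 0 ≤ G := abs_nonneg _
  refine ⟨(G + K * |σ| * M) / (-β), by positivity, ?_⟩
  rintro X Y Z ⟨⟨hXc, hXb⟩, ⟨hYc, hYb⟩, ⟨hZc, hZb⟩⟩
  set N : ℝ := normBeta3 β X Y Z with hN
  have hN0 : 0 ≤ N := by
    have := normBeta_nonneg hXb; have := normBeta_nonneg hYb; have := normBeta_nonneg hZb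
    unfold N; unfold normBeta3; linarith
  set f : ℝ → ℝ := fun s => g (X s + σ * η s) (Y s) (Z s) with hf
  -- pointwise bound on the integrand
  have hfb : ∀ s ≤ (0:ℝ), |f s| ≤ G + K * |σ| * M + K * Real.exp (β*s) * N := by
    intro s hs
    have hX := normBeta_pt hXb hs
    have hY := normBeta_pt hYb hs
    have hZ := normBeta_pt hZb hs
    have hη' : |σ * η s| ≤ |σ| * M := by
      rw [abs_mul]; exact mul_le_mul_of_nonneg_left (hMb s hs) (abs_nonneg _)
    have h1 : |f s - g 0 0 0| ≤ K * (|X s + σ * η s| + |Y s| + |Z s|) := by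
      simpa using hg (X s + σ * η s) (Y s) (Z s) 0 0 0
    have h2 : |X s + σ * η s| + |Y s| + |Z s| ≤
        |σ| * M + Real.exp (β*s) * N := by
      have := abs_add_le (X s) (σ * η s)
      unfold N; unfold normBeta3; nlinarith [Real.exp_pos (β*s)]
    have h3 : K * (|X s + σ * η s| + |Y s| + |Z s|) ≤
        K * (|σ| * M + Real.exp (β*s) * N) := mul_le_mul_of_nonneg_left h2 hK.le
    have h4 : |f s| ≤ |f s - g 0 0 0| + G := by
      rw [hG]; simpa using abs_add_le (f s - g 0 0 0) (g 0 0 0)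
    nlinarith
  -- continuity of the uncurried g
  have hgc : Continuous (fun p : ℝ × ℝ × ℝ => g p.1 p.2.1 p.2.2) := by
    have hL : LipschitzWith (Real.toNNReal (3*K)) (fun p : ℝ × ℝ × ℝ => g p.1 p.2.1 p.2.2) := by
      apply LipschitzWith.of_dist_le_mul
      intro p q
      rw [Real.dist_eq, Real.coe_toNNReal _ (by positivity)]
      have h1 := hg p.1 p.2.1 p.2.2 q.1 q.2.1 q.2.2
      have d1 : |p.1 - q.1| ≤ dist p q := by
        rw [← Real.dist_eq, Prod.dist_eq]; exact le_max_left _ _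
      have d2 : |p.2.1 - q.2.1| ≤ dist p q := by
        rw [← Real.dist_eq, Prod.dist_eq]
        exact le_trans (le_trans (by rw [Prod.dist_eq]; exact le_max_left _ _) (le_max_right (dist p.1 q.1) _)) le_rfl
      have d3 : |p.2.2 - q.2.2| ≤ dist p q := by
        rw [← Real.dist_eq, Prod.dist_eq]
        exact le_trans (le_trans (by rw [Prod.dist_eq]; exact le_max_right _ _) (le_max_right (dist p.1 q.1) _)) le_rfl
      nlinarith [abs_nonneg (p.1 - q.1), abs_nonneg (p.2.1 - q.2.1), abs_nonneg (p.2.2 - q.2.2)]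
    exact hL.continuous
  -- interval integrability of the integrand
  have hInt : ∀ t ≤ (0:ℝ), IntervalIntegrable f volume t 0 := by
    intro t ht
    have hmeas : MeasurableSet (Set.Ioc t 0) := measurableSet_Ioc
    have hsub : Set.Ioc t 0 ⊆ Set.Iic (0:ℝ) := Set.Ioc_subset_Iic_self
    have hXm : AEMeasurable X (volume.restrict (Set.Ioc t 0)) :=
      (hXc.mono hsub).aemeasurable hmeas
    have hYm : AEMeasurable Y (volume.restrict (Set.Ioc t 0)) :=
      (hYc.mono hsub).aemeasurable hmeas
    have hZm : AEMeasurable Z (volume.restrict (Set.Ioc t 0)) :=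
      (hZc.mono hsub).aemeasurable hmeas
    have hηm : AEMeasurable (fun s => σ * η s) (volume.restrict (Set.Ioc t 0)) :=
      (hη.const_mul σ).aemeasurable
    have hcomp : AEMeasurable f (volume.restrict (Set.Ioc t 0)) :=
      hgc.measurable.comp_aemeasurable ((hXm.add hηm).prodMk (hYm.prodMk hZm))
    have hbdd : ∀ᵐ s ∂(volume.restrict (Set.Ioc t 0)),
        ‖f s‖ ≤ G + K * |σ| * M + K * Real.exp (β*t) * N := by
      refine (ae_restrict_iff' hmeas).mpr (Filter.Eventually.of_forall fun s hs => ?_)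
      have h1 := hfb s hs.2
      have h2 : Real.exp (β*s) ≤ Real.exp (β*t) :=
        Real.exp_le_exp.mpr (mul_le_mul_of_nonpos_left hs.1.le hβ.le)
      rw [Real.norm_eq_abs]
      have h3 : K * Real.exp (β*s) * N ≤ K * Real.exp (β*t) * N :=
        mul_le_mul_of_nonneg_right (mul_le_mul_of_nonneg_left h2 hK.le) hN0
      linarith
    have hio : IntegrableOn f (Set.Ioc t 0) volume :=
      Integrable.mono' (integrable_const _) hcomp.aestronglyMeasurable hbdd
    rw [intervalIntegrable_iff, Set.uIoc_of_le ht]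
    exact hio
  -- continuity of the primitive
  have hcont : ContinuousOn (LPslow Y₀ σ η g X Y Z) (Set.Iic 0) := by
    intro t₀ ht₀
    have ht₀' : t₀ ≤ (0:ℝ) := ht₀
    have h01 : t₀ - 1 ≤ (0:ℝ) := by linarith
    have hI : IntervalIntegrable f volume (t₀ - 1) 0 := hInt _ h01
    have hmem : (0:ℝ) ∈ Set.uIcc (t₀-1) 0 := Set.right_mem_uIcc
    have hc := intervalIntegral.continuousOn_primitive_interval' hI hmem
    have h2 : ContinuousWithinAt (fun b => ∫ x in (0:ℝ)..b, f x) (Set.uIcc (t₀-1) 0) t₀ :=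
      hc t₀ (by rw [Set.uIcc_of_le h01]; exact ⟨by linarith, ht₀'⟩)
    have h3 : Set.uIcc (t₀-1) 0 ∈ nhdsWithin t₀ (Set.Iic 0) := by
      rw [Set.uIcc_of_le h01]
      refine mem_nhdsWithin.mpr ⟨Set.Ioi (t₀-1), isOpen_Ioi, by simp, ?_⟩
      rintro x ⟨hx1, hx2⟩
      exact ⟨le_of_lt hx1, hx2⟩
    have h4 : ContinuousWithinAt (fun b => ∫ x in (0:ℝ)..b, f x) (Set.Iic 0) t₀ :=
      h2.mono_of_mem_nhdsWithin h3
    exact (continuousWithinAt_const.add h4)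
  -- the key pointwise bound on the weighted function
  set c₁ : ℝ := G + K * |σ| * M with hc₁
  have hc₁0 : 0 ≤ c₁ := by positivity
  set D : ℝ := K / (-β) * N + |Y₀| + c₁ / (-β) with hD
  have hkey : ∀ t : Set.Iic (0:ℝ),
      Real.exp (-β * t.1) * |LPslow Y₀ σ η g X Y Z t.1| ≤ D := by
    rintro ⟨t, htm⟩
    have ht : t ≤ 0 := htm
    simp only
    set F := Real.exp (β*t) with hF
    set E := Real.exp (-β*t) with hE
    have hEF : E * F = 1 := by rw [hE, hF, ← Real.exp_add]; ring_nf; exact Real.exp_zero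
    have hE0 : (0:ℝ) < E := Real.exp_pos _
    have hE1 : E ≤ 1 := Real.exp_le_one_iff.mpr (by nlinarith)
    have hcφ : Continuous (fun s => c₁ + K * Real.exp (β*s) * N) := by fun_prop
    have hφint : IntervalIntegrable (fun s => c₁ + K * Real.exp (β*s) * N) volume t 0 :=
      hcφ.intervalIntegrable _ _
    have hIineq : |∫ s in (0:ℝ)..t, f s| ≤ ∫ s in t..(0:ℝ), (c₁ + K * Real.exp (β*s) * N) := by
      rw [intervalIntegral.integral_symm, abs_neg]
      calc |∫ s in t..(0:ℝ), f s| ≤ ∫ s in t..(0:ℝ), |f s| :=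
            intervalIntegral.abs_integral_le_integral_abs ht
        _ ≤ _ := intervalIntegral.integral_mono_on ht (hInt t ht).abs hφint
              (fun s hs => by have := hfb s hs.2; rw [hc₁]; linarith)
    have hexp : ∫ s in t..(0:ℝ), Real.exp (β*s) = (F - 1)/(-β) := by
      rw [intervalIntegral.integral_comp_mul_left Real.exp (ne_of_lt hβ)]
      rw [mul_zero, integral_exp, Real.exp_zero, smul_eq_mul, hF]
      field_simp
      ring
    have hval : ∫ s in t..(0:ℝ), (c₁ + K * Real.exp (β*s) * N)
        = c₁ * (0 - t) + (K * N) * ((F-1)/(-β)) := by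
      have h2c : Continuous (fun s => K * Real.exp (β*s) * N) := by fun_prop
      rw [intervalIntegral.integral_add intervalIntegrable_const (h2c.intervalIntegrable _ _)]
      rw [intervalIntegral.integral_const]
      have heq : ∫ s in t..(0:ℝ), K * Real.exp (β*s) * N
          = (K*N) * ∫ s in t..(0:ℝ), Real.exp (β*s) := by
        rw [← intervalIntegral.integral_const_mul]
        congr 1; ext s; ring
      rw [heq, hexp, smul_eq_mul]; ring
    have hA : (0 - t) * E ≤ 1 / (-β) := by
      have hu : (0:ℝ) ≤ β * t := by nlinarith
      have h1 : β * t ≤ F := le_trans (by linarith) (Real.add_one_le_exp _)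
      have h2 : (β * t) * E ≤ 1 := by nlinarith
      rw [le_div_iff₀ hβ']
      nlinarith
    have hB : E * (F - 1) ≤ 1 := by nlinarith
    calc E * |LPslow Y₀ σ η g X Y Z t|
        ≤ E * (|Y₀| + |∫ s in (0:ℝ)..t, f s|) := by
          apply mul_le_mul_of_nonneg_left _ hE0.le
          simp only [LPslow]
          exact abs_add_le _ _
      _ = E * |Y₀| + E * |∫ s in (0:ℝ)..t, f s| := mul_add _ _ _
      _ ≤ 1 * |Y₀| + E * (c₁ * (0 - t) + (K*N) * ((F-1)/(-β))) := by
          apply add_le_add (mul_le_mul_of_nonneg_right hE1 (abs_nonneg _))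
          apply mul_le_mul_of_nonneg_left _ hE0.le
          rw [← hval]; exact hIineq
      _ = |Y₀| + c₁ * ((0-t)*E) + (K/(-β)*N) * (E*(F-1)) := by ring
      _ ≤ |Y₀| + c₁ * (1/(-β)) + (K/(-β)*N) * 1 := by
          have hKN : (0:ℝ) ≤ K/(-β)*N := by positivity
          gcongr
      _ ≤ D := by rw [hD]; apply le_of_eq; ring
  haveI : Nonempty (Set.Iic (0:ℝ)) := ⟨⟨0, Set.self_mem_Iic⟩⟩
  have hbA : BddAbove (Set.range fun t : Set.Iic (0:ℝ) =>
      Real.exp (-β * t.1) * |LPslow Y₀ σ η g X Y Z t.1|) := by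
    refine ⟨D, ?_⟩
    rintro x ⟨t, rfl⟩
    exact hkey t
  refine ⟨⟨hcont, hbA⟩, ?_⟩
  exact le_trans (ciSup_le hkey) (le_of_eq (by rw [hD]))

/-- under `β < 0`, `ε > 0`, `η` bounded and measurable, and the joint
Lipschitz condition with constant `K`, for every `Y₀` (resp. `Z₀`) there is a constant
`C ≥ 0` (resp. `C' ≥ 0`), independent of `U`, such that for every `U = (X,Y,Z) ∈ C_β^{3,-}`
the function `𝔍₂(U)` (resp. `𝔍₃(U)`) belongs to `C_β^-` and
`‖𝔍₂(U)‖_β ≤ (K/(-β))‖U‖_{C_β^{3,-}} + |Y₀| + C` (resp. with `Z₀`, `C'`). -/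
theorem lyapunov_perron_slow_bound
    (β : ℝ) (hβ : β < 0) (ε : ℝ) (hε : 0 < ε) (σ : ℝ)
    (η : ℝ → ℝ) (hη_meas : Measurable η) (hη_bdd : ∃ M : ℝ, ∀ s ≤ (0 : ℝ), |η s| ≤ M)
    (K : ℝ) (hK : 0 < K) (g₁ g₂ g₃ : ℝ → ℝ → ℝ → ℝ)
    (hLip : JointLipschitz K g₁ g₂ g₃) (Y₀ Z₀ : ℝ) :
    ∃ C ≥ (0 : ℝ), ∃ C' ≥ (0 : ℝ),
      ∀ X Y Z : ℝ → ℝ, memCbeta3 β X Y Z →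
        (memCbeta β (LPslow Y₀ σ η g₂ X Y Z) ∧
          normBeta β (LPslow Y₀ σ η g₂ X Y Z) ≤
            K / (-β) * normBeta3 β X Y Z + |Y₀| + C) ∧
        (memCbeta β (LPslow Z₀ σ η g₃ X Y Z) ∧
          normBeta β (LPslow Z₀ σ η g₃ X Y Z) ≤
            K / (-β) * normBeta3 β X Y Z + |Z₀| + C') := by

  obtain ⟨M, hM⟩ := hη_bdd
  have hg2 : ∀ x y z x' y' z' : ℝ, |g₂ x y z - g₂ x' y' z'| ≤ K * (|x-x'| + |y-y'| + |z-z'|) := by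
    intro x y z x' y' z'
    have h := hLip x y z x' y' z'
    have h1 := abs_nonneg (g₁ x y z - g₁ x' y' z')
    have h3 := abs_nonneg (g₃ x y z - g₃ x' y' z')
    linarith
  have hg3 : ∀ x y z x' y' z' : ℝ, |g₃ x y z - g₃ x' y' z'| ≤ K * (|x-x'| + |y-y'| + |z-z'|) := by
    intro x y z x' y' z'
    have h := hLip x y z x' y' z'
    have h1 := abs_nonneg (g₁ x y z - g₁ x' y' z')
    have h2 := abs_nonneg (g₂ x y z - g₂ x' y' z')
    linarith
  obtain ⟨C, hC0, hC⟩ := LPslow_aux β hβ σ η hη_meas M hM K hK g₂ hg2 Y₀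
  obtain ⟨C', hC'0, hC'⟩ := LPslow_aux β hβ σ η hη_meas M hM K hK g₃ hg3 Z₀
  exact ⟨C, hC0, C', hC'0, fun X Y Z h => ⟨hC X Y Z h, hC' X Y Z h⟩⟩
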